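/- Let H be a finite simple undirected graph with n = |V(H)| divisible by 3. Construct an instance of anonymous refugee housing with upper-bounds as follows. Let G' be the subdivision of H in which every subdivision vertex w_e (adjacent exactly to the two endpoints of the edge e of H) is occupied by an edge-guard inhabitant h_e with ub(h_e) = 1. Take three disjoint copies G_1, G_2, G_3 of G', writing v^i for the copy in G_i of an original vertex v ∈ V(H). For each i ∈ {1,2,3} add a vertex g_i adjacent to v^i for every v ∈ V(H), occupied by a size-guard inhabitant with upper-bound n/3. For each v ∈ V(H) add a vertex g_v adjacent exactly to v^1, v^2, v^3, occupied by a vertex-guard inhabitant with upper-bound 1. All copies v^i of original vertices are empty, and the number of refugees is R = n. Then H admits a proper 3-colouring in which every colour class has size exactly n/3 if and only if this instance admits an inhabitants-respecting housing of size n. -/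
import Mathlib

private def rhVtx {W : Type*} {E : Type*} (x : (Fin 3 × (W ⊕ E)) ⊕ (Fin 3 ⊕ W)) : Option W :=
  match x with
  | Sum.inl (_, Sum.inl v) => some v
  | _ => none

/-- Correctness of the reduction from Equitable
3-Colouring.  Vertices of the topology: `Sum.inl (i, Sum.inl v)` is the copy
`v^i` of an original vertex `v` of `H` in the copy `G_i` (empty);
`Sum.inl (i, Sum.inr e)` is the subdivision vertex `w_e^i`, occupied by an
edge-guard with upper-bound `1`; `Sum.inr (Sum.inl i)` is the size-guard
vertex `g_i`, adjacent to all `v^i` and occupied by an inhabitant with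
upper-bound `n/3`; and `Sum.inr (Sum.inr v)` is the vertex-guard vertex
`g_v`, adjacent exactly to `v^1, v^2, v^3` and occupied by an inhabitant
with upper-bound `1`.  With `R = n = |V(H)|` (divisible by 3), `H` has a
proper 3-colouring with all colour classes of size exactly `n/3` iff the
instance admits an inhabitants-respecting housing of size `n`. -/
theorem equitable_three_colouring_reduction_correctness
    {W : Type*} [Fintype W] [DecidableEq W]
    (H : SimpleGraph W) [DecidableRel H.Adj]
    (hdvd : 3 ∣ Fintype.card W)
    (G : SimpleGraph ((Fin 3 × (W ⊕ ↥H.edgeSet)) ⊕ (Fin 3 ⊕ W)))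
    [DecidableRel G.Adj]
    (hadj : ∀ x y, G.Adj x y ↔
      (∃ (i : Fin 3) (v : W) (e : H.edgeSet), v ∈ (e : Sym2 W) ∧
        ((x = Sum.inl (i, Sum.inl v) ∧ y = Sum.inl (i, Sum.inr e)) ∨
         (x = Sum.inl (i, Sum.inr e) ∧ y = Sum.inl (i, Sum.inl v)))) ∨
      (∃ (i : Fin 3) (v : W),
        ((x = Sum.inr (Sum.inl i) ∧ y = Sum.inl (i, Sum.inl v)) ∨
         (x = Sum.inl (i, Sum.inl v) ∧ y = Sum.inr (Sum.inl i)))) ∨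
      (∃ (i : Fin 3) (v : W),
        ((x = Sum.inr (Sum.inr v) ∧ y = Sum.inl (i, Sum.inl v)) ∨
         (x = Sum.inl (i, Sum.inl v) ∧ y = Sum.inr (Sum.inr v))))) :
    (∃ c : W → Fin 3, (∀ u v : W, H.Adj u v → c u ≠ c v) ∧
        ∀ j : Fin 3,
          (Finset.univ.filter (fun v => c v = j)).card = Fintype.card W / 3) ↔
    (∃ π : Finset ((Fin 3 × (W ⊕ ↥H.edgeSet)) ⊕ (Fin 3 ⊕ W)),
      (∀ x ∈ π, ∃ (i : Fin 3) (v : W), x = Sum.inl (i, Sum.inl v)) ∧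
      π.card = Fintype.card W ∧
      (∀ (i : Fin 3) (e : H.edgeSet),
        (π.filter (fun x => G.Adj (Sum.inl (i, Sum.inr e)) x)).card ≤ 1) ∧
      (∀ i : Fin 3,
        (π.filter (fun x => G.Adj (Sum.inr (Sum.inl i)) x)).card ≤
          Fintype.card W / 3) ∧
      (∀ v : W,
        (π.filter (fun x => G.Adj (Sum.inr (Sum.inr v)) x)).card ≤ 1)) := by
  classical
  have adjE : ∀ (i j : Fin 3) (e : H.edgeSet) (v : W),
      G.Adj (Sum.inl (i, Sum.inr e)) (Sum.inl (j, Sum.inl v)) ↔ i = j ∧ v ∈ (e : Sym2 W) := by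
    intro i j e v
    rw [hadj]
    constructor
    · rintro (⟨i', v', e', hv', ⟨ha, hb⟩ | ⟨ha, hb⟩⟩ | ⟨i', v', ⟨ha, hb⟩ | ⟨ha, hb⟩⟩ |
        ⟨i', v', ⟨ha, hb⟩ | ⟨ha, hb⟩⟩) <;>
        simp only [Sum.inl.injEq, Sum.inr.injEq, Prod.mk.injEq, reduceCtorEq,
          false_and, and_false] at ha hb
      obtain ⟨rfl, rfl⟩ := ha
      obtain ⟨rfl, rfl⟩ := hb
      exact ⟨rfl, hv'⟩
    · rintro ⟨rfl, hv⟩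
      exact Or.inl ⟨i, v, e, hv, Or.inr ⟨rfl, rfl⟩⟩
  have adjS : ∀ (i j : Fin 3) (v : W),
      G.Adj (Sum.inr (Sum.inl i)) (Sum.inl (j, Sum.inl v)) ↔ i = j := by
    intro i j v
    rw [hadj]
    constructor
    · rintro (⟨i', v', e', hv', ⟨ha, hb⟩ | ⟨ha, hb⟩⟩ | ⟨i', v', ⟨ha, hb⟩ | ⟨ha, hb⟩⟩ |
        ⟨i', v', ⟨ha, hb⟩ | ⟨ha, hb⟩⟩) <;>
        simp only [Sum.inl.injEq, Sum.inr.injEq, Prod.mk.injEq, reduceCtorEq,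
          false_and, and_false] at ha hb
      exact ha.trans hb.1.symm
    · rintro rfl
      exact Or.inr (Or.inl ⟨i, v, Or.inl ⟨rfl, rfl⟩⟩)
  have adjV : ∀ (v : W) (i : Fin 3) (w : W),
      G.Adj (Sum.inr (Sum.inr v)) (Sum.inl (i, Sum.inl w)) ↔ v = w := by
    intro v i w
    rw [hadj]
    constructor
    · rintro (⟨i', v', e', hv', ⟨ha, hb⟩ | ⟨ha, hb⟩⟩ | ⟨i', v', ⟨ha, hb⟩ | ⟨ha, hb⟩⟩ |
        ⟨i', v', ⟨ha, hb⟩ | ⟨ha, hb⟩⟩) <;>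
        simp only [Sum.inl.injEq, Sum.inr.injEq, Prod.mk.injEq, reduceCtorEq,
          false_and, and_false] at ha hb
      exact ha.trans hb.2.symm
    · rintro rfl
      exact Or.inr (Or.inr ⟨i, v, Or.inl ⟨rfl, rfl⟩⟩)
  constructor
  · rintro ⟨c, hprop, hcount⟩
    refine ⟨Finset.univ.image (fun v => Sum.inl (c v, Sum.inl v)), ?_, ?_, ?_, ?_, ?_⟩
    · intro x hx
      simp only [Finset.mem_image, Finset.mem_univ, true_and] at hx
      obtain ⟨v, rfl⟩ := hx
      exact ⟨c v, v, rfl⟩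
    · have hinj : Function.Injective (fun v : W =>
          (Sum.inl (c v, Sum.inl v) : (Fin 3 × (W ⊕ ↥H.edgeSet)) ⊕ (Fin 3 ⊕ W))) := by
        intro a b h
        simp only [Sum.inl.injEq, Prod.mk.injEq] at h
        exact h.2
      rw [Finset.card_image_of_injective _ hinj, Finset.card_univ]
    · intro i e
      rw [Finset.card_le_one]
      intro x hx y hy
      simp only [Finset.mem_filter, Finset.mem_image, Finset.mem_univ, true_and] at hx hy
      obtain ⟨⟨u, rfl⟩, hxu⟩ := hx
      obtain ⟨⟨w, rfl⟩, hyw⟩ := hy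
      rw [adjE] at hxu hyw
      obtain ⟨hi1, hu⟩ := hxu
      obtain ⟨hi2, hw⟩ := hyw
      by_contra hne
      have hne' : u ≠ w := fun h => hne (by rw [h])
      have he : (e : Sym2 W) = s(u, w) := (Sym2.mem_and_mem_iff hne').mp ⟨hu, hw⟩
      have hE : s(u, w) ∈ H.edgeSet := he ▸ e.2
      exact hprop u w (H.mem_edgeSet.mp hE) (hi1.symm.trans hi2)
    · intro i
      have hsub : (Finset.univ.image fun v : W =>
            (Sum.inl (c v, Sum.inl v) : (Fin 3 × (W ⊕ ↥H.edgeSet)) ⊕ (Fin 3 ⊕ W))).filter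
            (fun x => G.Adj (Sum.inr (Sum.inl i)) x) ⊆
          (Finset.univ.filter (fun v => c v = i)).image (fun v => Sum.inl (c v, Sum.inl v)) := by
        intro x hx
        simp only [Finset.mem_filter, Finset.mem_image, Finset.mem_univ, true_and] at hx ⊢
        obtain ⟨⟨v, rfl⟩, hadjx⟩ := hx
        rw [adjS] at hadjx
        exact ⟨v, hadjx.symm, rfl⟩
      calc _ ≤ _ := Finset.card_le_card hsub
        _ ≤ (Finset.univ.filter (fun v => c v = i)).card := Finset.card_image_le
        _ = Fintype.card W / 3 := hcount i
    · intro v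
      rw [Finset.card_le_one]
      intro x hx y hy
      simp only [Finset.mem_filter, Finset.mem_image, Finset.mem_univ, true_and] at hx hy
      obtain ⟨⟨u, rfl⟩, hxu⟩ := hx
      obtain ⟨⟨w, rfl⟩, hyw⟩ := hy
      rw [adjV] at hxu hyw
      subst hxu
      subst hyw
      rfl
  · rintro ⟨π, h1, h2, h3, h4, h5⟩
    have huniq : ∀ (v : W) (i j : Fin 3),
        Sum.inl (i, Sum.inl v) ∈ π → Sum.inl (j, Sum.inl v) ∈ π → i = j := by
      intro v i j hi hj
      have hcard := h5 v
      rw [Finset.card_le_one] at hcard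
      have hx : (Sum.inl (i, Sum.inl v) : (Fin 3 × (W ⊕ ↥H.edgeSet)) ⊕ (Fin 3 ⊕ W)) ∈
          π.filter (fun x => G.Adj (Sum.inr (Sum.inr v)) x) :=
        Finset.mem_filter.mpr ⟨hi, (adjV v i v).mpr rfl⟩
      have hy : (Sum.inl (j, Sum.inl v) : (Fin 3 × (W ⊕ ↥H.edgeSet)) ⊕ (Fin 3 ⊕ W)) ∈
          π.filter (fun x => G.Adj (Sum.inr (Sum.inr v)) x) :=
        Finset.mem_filter.mpr ⟨hj, (adjV v j v).mpr rfl⟩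
      have := hcard _ hx _ hy
      simpa using this
    have hsurj : ∀ v : W, ∃ i : Fin 3, Sum.inl (i, Sum.inl v) ∈ π := by
      have hinj : Set.InjOn rhVtx (π : Set ((Fin 3 × (W ⊕ ↥H.edgeSet)) ⊕ (Fin 3 ⊕ W))) := by
        intro x hx y hy hxy
        obtain ⟨i, v, rfl⟩ := h1 x hx
        obtain ⟨j, w, rfl⟩ := h1 y hy
        obtain rfl : v = w := Option.some.inj hxy
        have hij := huniq v i j hx hy
        rw [hij]
      have hcard : (π.image rhVtx).card = Fintype.card W := by
        rw [Finset.card_image_of_injOn hinj, h2]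
      have hsub : π.image rhVtx ⊆ Finset.univ.image some := by
        intro y hy
        obtain ⟨x, hx, rfl⟩ := Finset.mem_image.mp hy
        obtain ⟨i, v, rfl⟩ := h1 x hx
        exact Finset.mem_image_of_mem some (Finset.mem_univ v)
      have hcard2 : (Finset.univ.image (some : W → Option W)).card = Fintype.card W := by
        rw [Finset.card_image_of_injective _ (Option.some_injective W), Finset.card_univ]
      have heq : π.image rhVtx = Finset.univ.image some :=
        Finset.eq_of_subset_of_card_le hsub (by rw [hcard, hcard2])
      intro v
      have hv : some v ∈ π.image rhVtx := by
        rw [heq]; exact Finset.mem_image_of_mem _ (Finset.mem_univ v)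
      obtain ⟨x, hx, hgx⟩ := Finset.mem_image.mp hv
      obtain ⟨i, w, rfl⟩ := h1 x hx
      obtain rfl : w = v := Option.some.inj hgx
      exact ⟨i, hx⟩
    choose c hc using hsurj
    refine ⟨c, ?_, ?_⟩
    · intro u v huv hcuv
      have he : s(u, v) ∈ H.edgeSet := H.mem_edgeSet.mpr huv
      have hcard := h3 (c v) ⟨s(u, v), he⟩
      rw [Finset.card_le_one] at hcard
      have hx : (Sum.inl (c v, Sum.inl u) : (Fin 3 × (W ⊕ ↥H.edgeSet)) ⊕ (Fin 3 ⊕ W)) ∈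
          π.filter (fun x => G.Adj (Sum.inl (c v, Sum.inr ⟨s(u, v), he⟩)) x) := by
        refine Finset.mem_filter.mpr ⟨hcuv ▸ hc u, ?_⟩
        rw [adjE]
        exact ⟨rfl, by simp [Sym2.mem_iff]⟩
      have hy : (Sum.inl (c v, Sum.inl v) : (Fin 3 × (W ⊕ ↥H.edgeSet)) ⊕ (Fin 3 ⊕ W)) ∈
          π.filter (fun x => G.Adj (Sum.inl (c v, Sum.inr ⟨s(u, v), he⟩)) x) := by
        refine Finset.mem_filter.mpr ⟨hc v, ?_⟩
        rw [adjE]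
        exact ⟨rfl, by simp [Sym2.mem_iff]⟩
      have heq := hcard _ hx _ hy
      simp only [Sum.inl.injEq, Prod.mk.injEq] at heq
      exact H.ne_of_adj huv heq.2
    · have hle : ∀ j : Fin 3,
          (Finset.univ.filter (fun v => c v = j)).card ≤ Fintype.card W / 3 := by
        intro j
        have hmap : ∀ v ∈ Finset.univ.filter (fun v => c v = j),
            (Sum.inl (j, Sum.inl v) : (Fin 3 × (W ⊕ ↥H.edgeSet)) ⊕ (Fin 3 ⊕ W)) ∈
              π.filter (fun x => G.Adj (Sum.inr (Sum.inl j)) x) := by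
          intro v hv
          rw [Finset.mem_filter] at hv
          exact Finset.mem_filter.mpr ⟨hv.2 ▸ hc v, (adjS j j v).mpr rfl⟩
        have hinj : ∀ a ∈ Finset.univ.filter (fun v => c v = j),
            ∀ b ∈ Finset.univ.filter (fun v => c v = j),
            (Sum.inl (j, Sum.inl a) : (Fin 3 × (W ⊕ ↥H.edgeSet)) ⊕ (Fin 3 ⊕ W)) =
              Sum.inl (j, Sum.inl b) → a = b := by
          intro a _ b _ hab
          simpa using hab
        exact (Finset.card_le_card_of_injOn _ hmap hinj).trans (h4 j)
      have hsum : ∑ j : Fin 3, (Finset.univ.filter (fun v => c v = j)).card =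
          Fintype.card W := by
        rw [← Finset.card_univ (α := W)]
        exact (Finset.card_eq_sum_card_fiberwise (fun v _ => Finset.mem_univ (c v))).symm
      intro j
      by_contra hne
      have hlt : (Finset.univ.filter (fun v => c v = j)).card < Fintype.card W / 3 :=
        lt_of_le_of_ne (hle j) hne
      have hslt : ∑ i : Fin 3, (Finset.univ.filter (fun v => c v = i)).card <
          ∑ _i : Fin 3, Fintype.card W / 3 :=
        Finset.sum_lt_sum (fun i _ => hle i) ⟨j, Finset.mem_univ j, hlt⟩
      rw [hsum, Finset.sum_const, Finset.card_univ, Fintype.card_fin, smul_eq_mul] at hslt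
      omega
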